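/- For every positive integer n and every integer-valued polynomial P of degree at most n, the polynomial lcm(1,2,...,n)·P' is also integer-valued (of degree at most n). -/

import Mathlib

open Polynomial

/-- A polynomial `P ∈ ℚ[X]` is integer-valued if it takes integer values at all integers. -/
def IntValued (P : Polynomial ℚ) : Prop := ∀ m : ℤ, ∃ z : ℤ, P.eval (m : ℚ) = (z : ℚ)

noncomputable def bp (k : ℕ) : ℚ[X] := C ((k.factorial : ℚ)⁻¹) * descPochhammer ℚ k

lemma descPascal (k : ℕ) :
    (descPochhammer ℚ (k+1)).comp (X + 1) - descPochhammer ℚ (k+1)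
      = ((k : ℚ) + 1) • descPochhammer ℚ k := by
  have h1 : (descPochhammer ℚ (k+1)).comp (X + 1) = (X + 1) * descPochhammer ℚ k := by
    rw [descPochhammer_succ_left, mul_comp, X_comp, comp_assoc]
    have : ((X : ℚ[X]) - 1).comp (X + 1) = X := by
      simp [sub_comp]
    rw [this, comp_X]
  rw [h1, descPochhammer_succ_right]
  ring_nf
  rw [smul_eq_C_mul, C_add, C_1, C_eq_natCast]
  ring

lemma bpPascal (k : ℕ) : (bp (k+1)).comp (X + 1) - bp (k+1) = bp k := by
  unfold bp
  rw [mul_comp, C_comp, ← mul_sub, descPascal, smul_eq_C_mul, ← mul_assoc, ← C_mul]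
  congr 1
  rw [Nat.factorial_succ]
  have h1 : ((k : ℚ) + 1) ≠ 0 := by positivity
  have h2 : ((k.factorial : ℚ)) ≠ 0 := by exact_mod_cast Nat.factorial_ne_zero k
  push_cast
  field_simp

lemma bp_intValued (k : ℕ) : IntValued (bp k) := by
  intro m
  refine ⟨Ring.choose m k, ?_⟩
  have h := Ring.descPochhammer_eq_factorial_smul_choose (R := ℤ) m k
  rw [← Polynomial.eval_eq_smeval] at h
  have h2 := descPochhammer_eval_cast (R := ℚ) k m
  unfold bp
  rw [eval_mul, eval_C, ← h2, h, nsmul_eq_mul]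
  push_cast
  rw [inv_mul_cancel_left₀]
  exact_mod_cast Nat.factorial_ne_zero k

lemma bp_natDegree (k : ℕ) : (bp k).natDegree = k := by
  unfold bp
  rw [natDegree_C_mul, descPochhammer_natDegree]
  exact inv_ne_zero (by exact_mod_cast Nat.factorial_ne_zero k)

lemma delta_intValued (P : ℚ[X]) (hP : IntValued P) : IntValued (P.comp (X + 1) - P) := by
  intro m
  obtain ⟨z1, hz1⟩ := hP (m + 1)
  obtain ⟨z2, hz2⟩ := hP m
  refine ⟨z1 - z2, ?_⟩
  rw [eval_sub, eval_comp, eval_add, eval_X, eval_one, hz2]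
  push_cast at hz1 ⊢
  rw [hz1]

lemma delta_natDegree (P : ℚ[X]) {n : ℕ} (h : P.natDegree ≤ n + 1) :
    (P.comp (X + 1) - P).natDegree ≤ n := by
  set Q := P.comp (X + 1) - P with hQ
  by_cases hQ0 : Q = 0
  · simp [hQ0]
  by_cases hc : P.natDegree = 0
  · obtain ⟨c, rfl⟩ := natDegree_eq_zero.mp hc
    simp [hQ] at hQ0
  have hP0 : P ≠ 0 := by rintro rfl; simp [hQ] at hQ0
  have hX1 : ((X : ℚ[X]) + 1).natDegree = 1 := by
    simpa using natDegree_X_add_C (1 : ℚ)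
  have hlc : (P.comp (X + 1)).leadingCoeff = P.leadingCoeff := by
    rw [leadingCoeff_comp (by rw [hX1]; norm_num)]
    have : ((X : ℚ[X]) + 1).leadingCoeff = 1 := by
      simpa using leadingCoeff_X_add_C (1 : ℚ)
    rw [this, one_pow, mul_one]
  have hcomp0 : P.comp (X + 1) ≠ 0 := fun h0 => by
    rw [h0, leadingCoeff_zero] at hlc
    exact hP0 (leadingCoeff_eq_zero.mp hlc.symm)
  have hnd : (P.comp (X + 1)).natDegree = P.natDegree := by
    rw [natDegree_comp, hX1, mul_one]
  have hdeg : (P.comp (X + 1)).degree = P.degree := by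
    rw [degree_eq_natDegree hcomp0, degree_eq_natDegree hP0, hnd]
  have hlt : Q.degree < P.degree := hdeg ▸ degree_sub_lt hdeg hcomp0 hlc
  have : Q.natDegree < P.natDegree := natDegree_lt_natDegree hQ0 hlt
  omega

lemma periodic_eq_C (S : ℚ[X]) (hS : S.comp (X + 1) = S) : S = C (S.eval 0) := by
  have key : ∀ j : ℕ, S.eval (j : ℚ) = S.eval 0 := by
    intro j
    induction j with
    | zero => norm_num
    | succ j ih =>
      have := congrArg (eval (j : ℚ)) hS
      rw [eval_comp, eval_add, eval_X, eval_one] at this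
      push_cast
      rw [this]
      exact ih
  have : S - C (S.eval 0) = 0 := by
    apply eq_zero_of_infinite_isRoot
    apply Set.infinite_of_injective_forall_mem (f := (Nat.cast : ℕ → ℚ))
      (Nat.cast_injective)
    intro j
    simp only [Set.mem_setOf_eq, IsRoot, eval_sub, eval_C, key j, sub_self]
  linear_combination (norm := module) this

lemma repr_binomial : ∀ n : ℕ, ∀ P : ℚ[X], IntValued P → P.natDegree ≤ n →
    ∃ a : ℕ → ℤ, P = ∑ k ∈ Finset.range (n+1), C ((a k : ℤ) : ℚ) * bp k := by
  intro n
  induction n with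
  | zero =>
    intro P hP hdeg
    obtain ⟨c, rfl⟩ := natDegree_eq_zero.mp (Nat.le_zero.mp hdeg)
    obtain ⟨z, hz⟩ := hP 0
    refine ⟨fun _ => z, ?_⟩
    have : c = (z : ℚ) := by simpa using hz
    simp [this, bp, descPochhammer_zero]
  | succ n ih =>
    intro P hP hdeg
    obtain ⟨a, ha⟩ := ih (P.comp (X + 1) - P) (delta_intValued P hP) (delta_natDegree P hdeg)
    set R : ℚ[X] := ∑ k ∈ Finset.range (n+1), C ((a k : ℤ) : ℚ) * bp (k+1) with hR
    have hRQ : R.comp (X + 1) - R = P.comp (X + 1) - P := by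
      rw [ha, hR, Polynomial.comp, eval₂_finset_sum, ← Finset.sum_sub_distrib]
      apply Finset.sum_congr rfl
      intro k _
      rw [← Polynomial.comp, mul_comp, C_comp, ← mul_sub, bpPascal]
    have hper : (P - R).comp (X + 1) = P - R := by
      rw [sub_comp]
      linear_combination -hRQ
    have hSC := periodic_eq_C (P - R) hper
    have hR0 : R.eval 0 = 0 := by
      rw [hR, eval_finset_sum]
      apply Finset.sum_eq_zero
      intro k _
      rw [eval_mul]
      have hb : (bp (k+1)).eval 0 = 0 := by
        unfold bp
        rw [eval_mul, descPochhammer_ne_zero_eval_zero (R := ℚ) (Nat.succ_ne_zero k), mul_zero]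
      rw [hb, mul_zero]
    obtain ⟨z0, hz0⟩ := hP 0
    have he : (P - R).eval 0 = ((z0 : ℤ) : ℚ) := by
      rw [eval_sub, hR0, sub_zero]
      simpa using hz0
    rw [he] at hSC
    have hPR : P = R + C ((z0 : ℤ) : ℚ) := by linear_combination hSC
    refine ⟨fun k => Nat.rec z0 (fun j _ => a j) k, ?_⟩
    rw [Finset.sum_range_succ']
    show P = (∑ k ∈ Finset.range (n+1), C ((a k : ℤ) : ℚ) * bp (k+1)) + C ((z0 : ℤ) : ℚ) * bp 0
    have hbp0 : bp 0 = 1 := by simp [bp, descPochhammer_zero]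
    rw [hbp0, mul_one, ← hR, hPR]

lemma deriv_desc (k : ℕ) :
    (derivative (descPochhammer ℚ (k+1))).eval 0 = (-1)^k * k.factorial := by
  induction k with
  | zero => simp [descPochhammer_one]
  | succ k ih =>
    rw [descPochhammer_succ_right, derivative_mul, eval_add, eval_mul, eval_mul, ih]
    have h0 : (descPochhammer ℚ (k+1)).eval 0 = 0 :=
      descPochhammer_ne_zero_eval_zero (R := ℚ) (Nat.succ_ne_zero k)
    rw [h0, zero_mul, add_zero]
    have : ((X : ℚ[X]) - (k+1 : ℕ)).eval 0 = -((k : ℚ) + 1) := by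
      push_cast
      simp
    rw [this, Nat.factorial_succ]
    push_cast
    ring

lemma deriv_bp (k : ℕ) :
    (derivative (bp (k+1))).eval 0 = (-1)^k / ((k : ℚ) + 1) := by
  unfold bp
  rw [derivative_C_mul, eval_mul, eval_C, deriv_desc, Nat.factorial_succ]
  have h1 : ((k : ℚ) + 1) ≠ 0 := by positivity
  have h2 : ((k.factorial : ℚ)) ≠ 0 := by exact_mod_cast Nat.factorial_ne_zero k
  push_cast
  field_simp

theorem lcm_mul_derivative_intValued (n : ℕ) (hn : 0 < n)
    (P : Polynomial ℚ) (hP : IntValued P) (hdeg : P.natDegree ≤ n) :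
    IntValued (C (((Finset.Icc 1 n).lcm id : ℕ) : ℚ) * derivative P) ∧
      (C (((Finset.Icc 1 n).lcm id : ℕ) : ℚ) * derivative P).natDegree ≤ n := by
  set L : ℕ := (Finset.Icc 1 n).lcm id with hL
  constructor
  · intro m
    set Pm : ℚ[X] := P.comp (X + C (m : ℚ)) with hPm
    have hPmIV : IntValued Pm := by
      intro j
      obtain ⟨z, hz⟩ := hP (j + m)
      refine ⟨z, ?_⟩
      rw [hPm, eval_comp, eval_add, eval_X, eval_C]
      push_cast at hz
      exact hz
    have hPmdeg : Pm.natDegree ≤ n := by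
      rw [hPm, natDegree_comp, natDegree_X_add_C, mul_one]
      exact hdeg
    obtain ⟨a, ha⟩ := repr_binomial n Pm hPmIV hPmdeg
    have hder : (derivative P).eval (m : ℚ) = (derivative Pm).eval 0 := by
      rw [hPm, derivative_comp]
      simp [eval_comp]
    refine ⟨∑ k ∈ Finset.range (n+1),
      a k * (Nat.rec 0 (fun j _ => (-1)^j * ((L / (j+1) : ℕ) : ℤ)) k), ?_⟩
    rw [eval_mul, eval_C, hder, ha]
    rw [derivative_sum, eval_finset_sum, Finset.mul_sum, Int.cast_sum]
    rw [Finset.sum_congr rfl]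
    intro k hk
    rw [Finset.mem_range] at hk
    cases k with
    | zero =>
      have : bp 0 = 1 := by simp [bp, descPochhammer_zero]
      simp [this]
    | succ j =>
      show (L : ℚ) * eval 0 (derivative (C ((a (j+1) : ℤ) : ℚ) * bp (j+1)))
        = (((a (j+1)) * ((-1)^j * ((L / (j+1) : ℕ) : ℤ)) : ℤ) : ℚ)
      rw [derivative_mul, derivative_C, zero_mul, zero_add, eval_mul, eval_C, deriv_bp]
      have hdvd : (j + 1) ∣ L := by
        apply Finset.dvd_lcm (f := id) (by rw [Finset.mem_Icc]; omega)
      have hcast : ((L / (j+1) : ℕ) : ℚ) = (L : ℚ) / ((j : ℚ) + 1) := by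
        rw [Nat.cast_div hdvd (by positivity)]
        push_cast
        ring
      rw [Int.cast_mul, Int.cast_mul, Int.cast_natCast, hcast]
      push_cast
      have h1 : ((j : ℚ) + 1) ≠ 0 := by positivity
      field_simp
  · calc (C ((L : ℕ) : ℚ) * derivative P).natDegree
        ≤ (derivative P).natDegree := natDegree_C_mul_le _ _
      _ ≤ P.natDegree - 1 := natDegree_derivative_le P
      _ ≤ n := by omega
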